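/- Let Q ⊂ ℝⁿ be a closed set and let M ⊂ Q be a locally minimal identifiable set at x̄ for a Fréchet normal v̄ ∈ N̂_Q(x̄). Then Q is prox-regular at x̄ for v̄ if and only if M is prox-regular at x̄ for v̄. -/

import Mathlib

open Filter Topology Metric Set
open scoped RealInnerProductSpace

noncomputable section

/-- `ℝⁿ` with the Euclidean structure. -/
abbrev Euc (n : ℕ) : Type := EuclideanSpace ℝ (Fin n)

section Defs

variable {H : Type*} [NormedAddCommGroup H] [InnerProductSpace ℝ H]
variable {H' : Type*} [NormedAddCommGroup H'] [InnerProductSpace ℝ H']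

/-- The inclusion `M ⊆ Q` holds locally around the point `x`. -/
def LocallyIncl {α : Type*} [TopologicalSpace α] (M Q : Set α) (x : α) : Prop :=
  ∃ U ∈ 𝓝 x, M ∩ U ⊆ Q ∩ U

/-- The equality `M = Q` holds locally around the point `x`. -/
def LocallyEq {α : Type*} [TopologicalSpace α] (M Q : Set α) (x : α) : Prop :=
  ∃ U ∈ 𝓝 x, M ∩ U = Q ∩ U

/-- The graph of a set-valued mapping. -/
def svGraph (G : H → Set H') : Set (H × H') := {p | p.2 ∈ G p.1}

/-- `G⁻¹(W)`, the preimage of a set `W` under the set-valued mapping `G`. -/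
def svPreimage (G : H → Set H') (W : Set H') : Set H := {x | (G x ∩ W).Nonempty}

/-- `M` is identifiable relative to the set-valued mapping `G` at `x` for `v ∈ G x`:
the inclusion `gph G ⊆ M × H'` holds locally around `(x, v)`. -/
def IdentifiableRel (G : H → Set H') (M : Set H) (x : H) (v : H') : Prop :=
  LocallyIncl (svGraph G) (M ×ˢ (univ : Set H')) (x, v)

/-- `M` is necessary relative to `G` at `x` for `v ∈ G x`: `x ∈ M` and the function
`y ↦ d(v, G y)`, restricted to `M`, is continuous at `x`. -/
def NecessaryRel (G : H → Set H') (M : Set H) (x : H) (v : H') : Prop :=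
  x ∈ M ∧ ContinuousWithinAt (fun y => EMetric.infEdist v (G y)) M x

/-- `M` is a locally minimal identifiable set relative to `G` at `x` for `v`. -/
def LocallyMinimalIdentifiableRel (G : H → Set H') (M : Set H) (x : H) (v : H') : Prop :=
  IdentifiableRel G M x v ∧ ∀ M' : Set H, IdentifiableRel G M' x v → LocallyIncl M M' x

/-- `M` is a locally maximal necessary set relative to `G` at `x` for `v`. -/
def LocallyMaximalNecessaryRel (G : H → Set H') (M : Set H) (x : H) (v : H') : Prop :=
  NecessaryRel G M x v ∧ ∀ M' : Set H, NecessaryRel G M' x v → LocallyIncl M' M x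

/-- The proximal normal cone to `Q` at `x`. -/
def proxNormalCone (Q : Set H) (x : H) : Set H :=
  {v | x ∈ Q ∧ ∃ r > (0:ℝ), ∀ y ∈ Q, dist (x + r⁻¹ • v) x ≤ dist (x + r⁻¹ • v) y}

/-- The Fréchet normal cone to `Q` at `x`. -/
def frechetNormalCone (Q : Set H) (x : H) : Set H :=
  {v | x ∈ Q ∧ ∀ ε > (0:ℝ), ∃ δ > (0:ℝ), ∀ y ∈ Q, dist y x < δ → ⟪v, y - x⟫ ≤ ε * ‖y - x‖}

/-- The limiting normal cone to `Q` at `x`. -/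
def limitingNormalCone (Q : Set H) (x : H) : Set H :=
  {v | ∃ xs vs : ℕ → H, (∀ i, vs i ∈ frechetNormalCone Q (xs i)) ∧
        Tendsto xs atTop (𝓝 x) ∧ Tendsto vs atTop (𝓝 v)}

/-- `Q` is locally closed at `x`. -/
def LocallyClosedAt (Q : Set H) (x : H) : Prop :=
  ∃ ε > (0:ℝ), IsClosed (Q ∩ closedBall x ε)

/-- `x` is the unique nearest point of `S` to `p`. -/
def IsUniqueNearestPt (S : Set H) (p x : H) : Prop :=
  x ∈ S ∧ ∀ y ∈ S, y ≠ x → dist p x < dist p y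

/-- `Q` is prox-regular at `xb` for `vb`. -/
def ProxRegularAt (Q : Set H) (xb vb : H) : Prop :=
  LocallyClosedAt Q xb ∧ ∃ ε > (0:ℝ), ∃ r > (0:ℝ), ∀ x ∈ Q,
    ∀ v ∈ limitingNormalCone Q x, dist x xb < ε → dist v vb < ε →
      IsUniqueNearestPt (Q ∩ closedBall xb ε) (x + r⁻¹ • v) x

/-- `Q` is Clarke regular at `x`. -/
def ClarkeRegularAt (Q : Set H) (x : H) : Prop :=
  LocallyClosedAt Q x ∧ limitingNormalCone Q x = frechetNormalCone Q x

/-- `M` is identifiable relative to the set `Q` at `xb` for `vb ∈ N_Q(xb)`: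
the graph of the limiting normal cone mapping is contained in `M × H` locally
around `(xb, vb)`. -/
def IdentifiableIn (Q M : Set H) (xb vb : H) : Prop :=
  ∃ W ∈ 𝓝 (xb, vb), ∀ p : H × H, p ∈ W → p.1 ∈ Q → p.2 ∈ limitingNormalCone Q p.1 → p.1 ∈ M

/-- `M` is a locally minimal identifiable set relative to the set `Q` at `xb` for `vb`. -/
def LocallyMinimalIdentifiableIn (Q M : Set H) (xb vb : H) : Prop :=
  IdentifiableIn Q M xb vb ∧ ∀ M' : Set H, IdentifiableIn Q M' xb vb → LocallyIncl M M' xb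

/-- The (Bouligand) tangent cone to `Q` at `xb`. -/
def tangentConeB (Q : Set H) (xb : H) : Set H :=
  {w | ∃ (xs : ℕ → H) (ts : ℕ → ℝ), (∀ i, xs i ∈ Q) ∧ (∀ i, 0 < ts i) ∧
      Tendsto ts atTop (𝓝 0) ∧ Tendsto xs atTop (𝓝 xb) ∧
      Tendsto (fun i => (ts i)⁻¹ • (xs i - xb)) atTop (𝓝 w)}

/-- The set of nearest points of `Q` to `y`. -/
def nearestPts (Q : Set H) (y : H) : Set H := {z | z ∈ Q ∧ ∀ w ∈ Q, dist y z ≤ dist y w}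

/-- A tangent vector `w ∈ T_Q(xb)` is smoothly derivable. -/
def SmoothlyDerivableVec (Q : Set H) (xb w : H) : Prop :=
  ∃ ε > (0:ℝ), ∃ γ : ℝ → H, ContDiffOn ℝ 1 γ (Ico (0:ℝ) ε) ∧ γ 0 = xb ∧
    (∀ t ∈ Ico (0:ℝ) ε, γ t ∈ Q) ∧
    Tendsto (fun t => t⁻¹ • (γ t - xb)) (𝓝[>] (0:ℝ)) (𝓝 w)

/-- `Q` is smoothly derivable at `xb`: every tangent vector is smoothly derivable. -/
def SmoothlyDerivableAt (Q : Set H) (xb : H) : Prop :=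
  ∀ w ∈ tangentConeB Q xb, SmoothlyDerivableVec Q xb w

/-- The normal cone of convex analysis. -/
def convNormalCone (C : Set H) (x : H) : Set H := {v | ∀ y ∈ C, ⟪v, y - x⟫ ≤ 0}

/-- The tangent cone of convex analysis. -/
def convTangentCone (C : Set H) (x : H) : Set H :=
  closure {w | ∃ l : ℝ, 0 ≤ l ∧ ∃ y ∈ C, w = l • (y - x)}

/-- A convex polyhedron: a finite intersection of closed halfspaces. -/
def IsPolyhedron (Q : Set H) : Prop :=
  ∃ (k : ℕ) (a : Fin k → H) (b : Fin k → ℝ), Q = {x | ∀ i, ⟪a i, x⟫ ≤ b i}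

/-- The relative interior of a set: interior relative to its affine span. -/
def relInterior (S : Set H) : Set H :=
  {v | v ∈ S ∧ ∃ ε > (0:ℝ), ∀ y ∈ (affineSpan ℝ S : Set H), dist y v < ε → y ∈ S}

/-- Inner semicontinuity at `xb` of a set-valued map restricted to `S`. -/
def InnerSemicontinuousOnAt (T : H → Set H') (S : Set H) (xb : H) : Prop :=
  ∀ xs : ℕ → H, (∀ i, xs i ∈ S) → Tendsto xs atTop (𝓝 xb) →
    ∀ w ∈ T xb, ∃ ws : ℕ → H', (∀ i, ws i ∈ T (xs i)) ∧ Tendsto ws atTop (𝓝 w)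

/-- `M` is a `C²` submanifold of the ambient space around the point `xb`. -/
def IsC2SubmanifoldAround (M : Set H) (xb : H) : Prop :=
  ∃ (m : ℕ) (F : H → EuclideanSpace ℝ (Fin m)) (U : Set H), IsOpen U ∧ xb ∈ U ∧
    ContDiffOn ℝ 2 F U ∧ Function.Surjective (fderiv ℝ F xb) ∧
    M ∩ U = {x ∈ U | F x = 0}

/-- `Q` is partly smooth with respect to the manifold `M` at `xb` for `vb`. -/
def PartlySmoothAt (Q M : Set H) (xb vb : H) : Prop :=
  ProxRegularAt Q xb vb ∧
  (Submodule.span ℝ (frechetNormalCone Q xb) : Set H) = limitingNormalCone M xb ∧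
  ∃ V ∈ 𝓝 vb, InnerSemicontinuousOnAt (fun x => V ∩ limitingNormalCone Q x) M xb

/-- `ℝⁿ × ℝ` with the Euclidean (ℓ²) structure, hosting epigraphs. -/
abbrev PairL2 (H : Type*) [NormedAddCommGroup H] : Type _ := WithLp 2 (H × ℝ)

/-- Build a point of `PairL2 H` from its components. -/
def pmk (x : H) (r : ℝ) : PairL2 H := (WithLp.equiv 2 (H × ℝ)).symm (x, r)

/-- The epigraph of an extended-real-valued function. -/
def epigraph (f : H → EReal) : Set (PairL2 H) :=
  {p | f ((WithLp.equiv 2 (H × ℝ)) p).1 ≤ (((WithLp.equiv 2 (H × ℝ)) p).2 : EReal)}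

/-- The limiting subdifferential. -/
def limSubdiff (f : H → EReal) (x : H) : Set H :=
  {v | ∃ r : ℝ, f x = (r : EReal) ∧
      pmk v (-1) ∈ limitingNormalCone (epigraph f) (pmk x r)}

/-- The horizon subdifferential. -/
def horizonSubdiff (f : H → EReal) (x : H) : Set H :=
  {v | ∃ r : ℝ, f x = (r : EReal) ∧
      pmk v 0 ∈ limitingNormalCone (epigraph f) (pmk x r)}

/-- The proximal subdifferential. -/
def proxSubdiff (f : H → EReal) (x : H) : Set H :=
  {v | ∃ r : ℝ, f x = (r : EReal) ∧
      pmk v (-1) ∈ proxNormalCone (epigraph f) (pmk x r)}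

/-- A function is Clarke regular at `x` if its epigraph is Clarke regular at `(x, f x)`. -/
def ClarkeRegularFn (f : H → EReal) (x : H) : Prop :=
  ∃ r : ℝ, f x = (r : EReal) ∧ ClarkeRegularAt (epigraph f) (pmk x r)

/-- `M` is identifiable at `xb` for `vb` relative to the function `f` with
subdifferential mapping `D`: for every sequence `(xᵢ, f xᵢ, vᵢ) → (xb, f xb, vb)`
with `vᵢ ∈ D xᵢ`, the points `xᵢ` lie in `M` for all large `i`. -/
def IdentifiableFn (f : H → EReal) (D : H → Set H) (M : Set H) (xb vb : H) : Prop :=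
  ∀ xs vs : ℕ → H, Tendsto xs atTop (𝓝 xb) →
    Tendsto (fun i => f (xs i)) atTop (𝓝 (f xb)) →
    Tendsto vs atTop (𝓝 vb) → (∀ i, vs i ∈ D (xs i)) →
    ∀ᶠ i in atTop, xs i ∈ M

/-- `M` is a locally minimal identifiable set relative to `f` (with subdifferential `D`). -/
def LocallyMinimalIdentifiableFn (f : H → EReal) (D : H → Set H) (M : Set H)
    (xb vb : H) : Prop :=
  IdentifiableFn f D M xb vb ∧ ∀ M' : Set H, IdentifiableFn f D M' xb vb → LocallyIncl M M' xb

/-- The subdifferential of convex analysis for an extended-real-valued function. -/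
def convexSubdiff (f : H → EReal) (x : H) : Set H :=
  {v | ∃ r : ℝ, f x = (r : EReal) ∧ ∀ y : H, ((r + ⟪v, y - x⟫ : ℝ) : EReal) ≤ f y}

/-- Convexity for an extended-real-valued function. -/
def ERealConvexOn (f : H → EReal) : Prop :=
  ∀ x y : H, ∀ a b : ℝ, 0 ≤ a → 0 ≤ b → a + b = 1 →
    f (a • x + b • y) ≤ (a : EReal) * f x + (b : EReal) * f y

/-- A piecewise linear-quadratic function: its domain is the union of finitely many
convex polyhedra, on each of which it agrees with a polynomial of degree at most 2. -/
def IsPiecewiseLinearQuadratic (f : H → EReal) : Prop :=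
  ∃ (k : ℕ) (C : Fin k → Set H), (∀ i, IsPolyhedron (C i)) ∧
    ({x | f x ≠ ⊤} = ⋃ i, C i) ∧
    ∀ i, ∃ (B : H →ₗ[ℝ] H →ₗ[ℝ] ℝ) (l : H →ₗ[ℝ] ℝ) (c : ℝ),
      ∀ x ∈ C i, f x = ((B x x + l x + c : ℝ) : EReal)


/-- Outer semicontinuity of a set-valued mapping (at every point). -/
def OuterSemicontinuousSV (G : H → Set H') : Prop :=
  ∀ (x : H) (v : H') (xs : ℕ → H) (vs : ℕ → H'),
    Tendsto xs atTop (𝓝 x) → Tendsto vs atTop (𝓝 v) →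
    (∀ i, vs i ∈ G (xs i)) → v ∈ G x

end Defs

section Helpers
variable {E : Type*} [NormedAddCommGroup E] [InnerProductSpace ℝ E]

lemma s13_dist_shift (x y v : E) (t : ℝ) :
    dist (x + t • v) y ^ 2 = t^2 * ‖v‖^2 - 2*t*⟪v, y - x⟫ + ‖y - x‖^2 := by
  have h : x + t • v - y = t • v - (y - x) := by abel
  rw [dist_eq_norm, h, norm_sub_sq_real, real_inner_smul_left, norm_smul]
  simp [mul_pow, sq_abs]
  ring

lemma s13_dist_self (x v : E) (t : ℝ) (ht : 0 ≤ t) :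
    dist (x + t • v) x = t * ‖v‖ := by
  have : x + t • v - x = t • v := by abel
  rw [dist_eq_norm, this, norm_smul, Real.norm_eq_abs, abs_of_nonneg ht]

lemma s13_L1 {r : ℝ} (hr : 0 < r) (x y v : E) :
    dist (x + r⁻¹ • v) x < dist (x + r⁻¹ • v) y ↔ ⟪v, y - x⟫ < r/2 * ‖y - x‖^2 := by
  have h1 : dist (x + r⁻¹ • v) x = r⁻¹ * ‖v‖ := s13_dist_self x v r⁻¹ (by positivity)
  have h2 := s13_dist_shift x y v r⁻¹
  have hd1 : (0:ℝ) ≤ dist (x + r⁻¹ • v) x := dist_nonneg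
  have hd2 : (0:ℝ) ≤ dist (x + r⁻¹ • v) y := dist_nonneg
  have hrpos : (0:ℝ) < r⁻¹ := by positivity
  have hri : r * r⁻¹ = 1 := mul_inv_cancel₀ (ne_of_gt hr)
  constructor
  · intro h
    have hsq : dist (x + r⁻¹ • v) x ^2 < dist (x + r⁻¹ • v) y ^2 := by nlinarith
    rw [h1, h2] at hsq
    have h4 : 2*r⁻¹*⟪v, y - x⟫ < ‖y - x‖^2 := by nlinarith
    nlinarith [mul_lt_mul_of_pos_left h4 hr]
  · intro h
    have h4 : 2*r⁻¹*⟪v, y - x⟫ < ‖y - x‖^2 := by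
      nlinarith [mul_lt_mul_of_pos_left h hrpos]
    have hsq : dist (x + r⁻¹ • v) x ^2 < dist (x + r⁻¹ • v) y ^2 := by
      rw [h1, h2]; nlinarith
    nlinarith

end Helpers

section Helpers2
variable {E : Type*} [NormedAddCommGroup E] [InnerProductSpace ℝ E]
variable {Q M : Set E} {x z v w : E}

lemma s13_frechet_subset_limiting (h : v ∈ frechetNormalCone Q x) :
    v ∈ limitingNormalCone Q x :=
  ⟨fun _ => x, fun _ => v, fun _ => h, tendsto_const_nhds, tendsto_const_nhds⟩

lemma s13_frechet_antitone (hMQ : M ⊆ Q) (hx : x ∈ M)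
    (h : v ∈ frechetNormalCone Q x) : v ∈ frechetNormalCone M x := by
  refine ⟨hx, fun ε hε => ?_⟩
  obtain ⟨δ, hδ, hy⟩ := h.2 ε hε
  exact ⟨δ, hδ, fun y hyM => hy y (hMQ hyM)⟩

lemma s13_mem_frechet_of_quad (hz : z ∈ Q) {c ι : ℝ} (hι : 0 < ι)
    (h : ∀ q ∈ Q, dist q z < ι → ⟪w, q - z⟫ ≤ c * ‖q - z‖^2) :
    w ∈ frechetNormalCone Q z := by
  refine ⟨hz, fun ε hε => ?_⟩
  refine ⟨min ι (ε/(|c|+1)), by positivity, fun y hy hdy => ?_⟩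
  have h1 := h y hy (lt_of_lt_of_le hdy (min_le_left _ _))
  have h2 : dist y z < ε/(|c|+1) := lt_of_lt_of_le hdy (min_le_right _ _)
  have hn : dist y z = ‖y - z‖ := dist_eq_norm y z
  rw [hn] at h2
  have hcb : ‖y - z‖ * (|c|+1) < ε := by
    rw [← lt_div_iff₀ (by positivity)]; exact h2
  have habs : c * ‖y-z‖^2 ≤ |c| * ‖y-z‖^2 :=
    mul_le_mul_of_nonneg_right (le_abs_self c) (sq_nonneg _)
  nlinarith [norm_nonneg (y - z), abs_nonneg c]

lemma s13_limiting_osc {xs : ℕ → E} {vs : ℕ → E}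
    (hx : Filter.Tendsto xs Filter.atTop (nhds x))
    (h : ∀ j, vs j ∈ limitingNormalCone Q (xs j))
    (hv : Filter.Tendsto vs Filter.atTop (nhds v)) :
    v ∈ limitingNormalCone Q x := by
  have H : ∀ j : ℕ, ∃ a b : E, b ∈ frechetNormalCone Q a ∧
      dist a (xs j) < 1/(j+1) ∧ dist b (vs j) < 1/(j+1) := by
    intro j
    obtain ⟨as, bs, hfb, ha, hb⟩ := h j
    have hpos : (0:ℝ) < 1/(j+1) := by positivity
    have h1 : ∀ᶠ i in Filter.atTop, dist (as i) (xs j) < 1/(j+1) :=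
      (Metric.tendsto_nhds.mp ha) _ hpos
    have h2 : ∀ᶠ i in Filter.atTop, dist (bs i) (vs j) < 1/(j+1) :=
      (Metric.tendsto_nhds.mp hb) _ hpos
    obtain ⟨i, hi1, hi2⟩ := (h1.and h2).exists
    exact ⟨as i, bs i, hfb i, hi1, hi2⟩
  choose as bs hfb ha hb using H
  have hz : Filter.Tendsto (fun j : ℕ => (1:ℝ)/(j+1)) Filter.atTop (nhds 0) :=
    tendsto_one_div_add_atTop_nhds_zero_nat
  have hxs : Filter.Tendsto (fun j => dist (xs j) x) Filter.atTop (nhds 0) :=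
    tendsto_iff_dist_tendsto_zero.mp hx
  have hvs : Filter.Tendsto (fun j => dist (vs j) v) Filter.atTop (nhds 0) :=
    tendsto_iff_dist_tendsto_zero.mp hv
  have hta : Filter.Tendsto as Filter.atTop (nhds x) := by
    rw [tendsto_iff_dist_tendsto_zero]
    apply squeeze_zero (fun j => dist_nonneg)
      (g := fun j => 1/(j+1) + dist (xs j) x)
      (fun j => le_trans (dist_triangle (as j) (xs j) x) (by linarith [le_of_lt (ha j)]))
    simpa using hz.add hxs
  have htb : Filter.Tendsto bs Filter.atTop (nhds v) := by
    rw [tendsto_iff_dist_tendsto_zero]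
    apply squeeze_zero (fun j => dist_nonneg)
      (g := fun j => 1/(j+1) + dist (vs j) v)
      (fun j => le_trans (dist_triangle (bs j) (vs j) v) (by linarith [le_of_lt (hb j)]))
    simpa using hz.add hvs
  exact ⟨as, bs, hfb, hta, htb⟩

end Helpers2

section Helpers3
variable {E : Type*} [NormedAddCommGroup E] [InnerProductSpace ℝ E]
variable {Q M : Set E} {xb vb : E}

lemma s13_ident_balls (h : IdentifiableIn Q M xb vb) :
    ∃ ρ > (0:ℝ), ∃ δ > (0:ℝ), ∀ z w, z ∈ Q → w ∈ limitingNormalCone Q z →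
      dist z xb < ρ → dist w vb < δ → z ∈ M := by
  obtain ⟨W, hW, hident⟩ := h
  rw [mem_nhds_prod_iff] at hW
  obtain ⟨U, hU, V, hV, hUV⟩ := hW
  obtain ⟨ρ, hρ, hball⟩ := Metric.mem_nhds_iff.mp hU
  obtain ⟨δ, hδ, hballv⟩ := Metric.mem_nhds_iff.mp hV
  refine ⟨ρ, hρ, δ, hδ, fun z w hzQ hwN hz hw => ?_⟩
  exact hident (z, w) (hUV ⟨hball hz, hballv hw⟩) hzQ hwN

lemma s13_selection (hmin : LocallyMinimalIdentifiableIn Q M xb vb) :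
    ∀ θ > (0:ℝ), ∃ ρθ > (0:ℝ), ∀ z ∈ M, dist z xb < ρθ →
      ∃ w ∈ limitingNormalCone Q z, dist w vb < θ := by
  intro θ hθ
  set M' : Set E := {z | z ∈ Q ∧ ∃ w ∈ limitingNormalCone Q z, dist w vb < θ} with hM'
  have hid : IdentifiableIn Q M' xb vb := by
    refine ⟨Metric.ball xb 1 ×ˢ Metric.ball vb θ,
      prod_mem_nhds (Metric.ball_mem_nhds xb one_pos) (Metric.ball_mem_nhds vb hθ), ?_⟩
    rintro ⟨z, w⟩ ⟨hz1, hz2⟩ hzQ hwN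
    exact ⟨hzQ, w, hwN, by simpa using hz2⟩
  obtain ⟨U, hU, hsub⟩ := hmin.2 M' hid
  obtain ⟨ρθ, hρθ, hball⟩ := Metric.mem_nhds_iff.mp hU
  refine ⟨ρθ, hρθ, fun z hzM hz => ?_⟩
  exact (hsub ⟨hzM, hball hz⟩).1.2

lemma s13_hyp_from_PR {S : Set E} (h : ProxRegularAt S xb vb) :
    ∃ ε > (0:ℝ), ∃ r > (0:ℝ), ∀ x u, x ∈ S → u ∈ limitingNormalCone S x →
      dist x xb < ε → dist u vb < ε → ∀ y ∈ S, dist y xb ≤ ε →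
        ⟪u, y - x⟫ ≤ r/2 * ‖y - x‖^2 := by
  obtain ⟨-, ε, hε, r, hr, hPR⟩ := h
  refine ⟨ε, hε, r, hr, fun x u hxS huN hx hu y hyS hy => ?_⟩
  rcases eq_or_ne y x with rfl | hne
  · simp
  · have h2 := (hPR x hxS u huN hx hu).2 y ⟨hyS, Metric.mem_closedBall.mpr hy⟩ hne
    exact le_of_lt ((s13_L1 hr x y u).mp h2)

variable [ProperSpace E]

lemma s13_M_locally_closed (hQ : IsClosed Q) (hMQ : M ⊆ Q)
    (hmin : LocallyMinimalIdentifiableIn Q M xb vb) :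
    LocallyClosedAt M xb := by
  obtain ⟨ρ, hρ, δ, hδ, hident⟩ := s13_ident_balls hmin.1
  obtain ⟨ρ2, hρ2, hsel⟩ := s13_selection hmin (δ/2) (by positivity)
  set εc := min ρ ρ2 / 2 with hεc
  have hεcpos : 0 < εc := by positivity
  refine ⟨εc, hεcpos, ?_⟩
  apply IsSeqClosed.isClosed
  intro zs z hzs hz
  have hzball : z ∈ Metric.closedBall xb εc :=
    (Metric.isClosed_closedBall).mem_of_tendsto hz (Filter.Eventually.of_forall fun n => (hzs n).2)
  have hzQ : z ∈ Q :=
    hQ.mem_of_tendsto hz (Filter.Eventually.of_forall fun n => hMQ (hzs n).1)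
  have hws : ∀ n, ∃ w ∈ limitingNormalCone Q (zs n), dist w vb < δ/2 := by
    intro n
    apply hsel (zs n) (hzs n).1
    calc dist (zs n) xb ≤ εc := (hzs n).2
    _ < ρ2 := by
        have := min_le_right ρ ρ2; simp only [hεc]; linarith
  choose ws hwsN hwsd using hws
  have hwball : ∀ n, ws n ∈ Metric.closedBall vb (δ/2) :=
    fun n => Metric.mem_closedBall.mpr (le_of_lt (hwsd n))
  obtain ⟨w, hwmem, φ, hφ, hwconv⟩ :=
    (isCompact_closedBall vb (δ/2)).tendsto_subseq hwball
  have hwN : w ∈ limitingNormalCone Q z :=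
    s13_limiting_osc (hz.comp hφ.tendsto_atTop) (fun j => hwsN (φ j)) hwconv
  have hzM : z ∈ M := by
    apply hident z w hzQ hwN
    · calc dist z xb ≤ εc := hzball
      _ < ρ := by have := min_le_left ρ ρ2; simp only [hεc]; linarith
    · calc dist w vb ≤ δ/2 := hwmem
      _ < δ := by linarith
  exact ⟨hzM, hzball⟩

end Helpers3

section Helpers4

lemma s13_sqrt_add_le {a b : ℝ} (ha : 0 ≤ a) (hb : 0 ≤ b) :
    Real.sqrt (a^2 + b^2) ≤ a + b := by
  have h : a^2 + b^2 ≤ (a+b)^2 := by nlinarith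
  calc Real.sqrt (a^2+b^2) ≤ Real.sqrt ((a+b)^2) := Real.sqrt_le_sqrt h
  _ = a + b := Real.sqrt_sq (by linarith)

lemma s13_le_sqrt_left {a b : ℝ} (ha : 0 ≤ a) :
    a ≤ Real.sqrt (a^2 + b^2) := by
  calc a = Real.sqrt (a^2) := (Real.sqrt_sq ha).symm
  _ ≤ Real.sqrt (a^2 + b^2) := Real.sqrt_le_sqrt (by nlinarith)

lemma s13_le_sqrt_right {a b : ℝ} (hb : 0 ≤ b) :
    b ≤ Real.sqrt (a^2 + b^2) := by
  calc b = Real.sqrt (b^2) := (Real.sqrt_sq hb).symm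
  _ ≤ Real.sqrt (a^2 + b^2) := Real.sqrt_le_sqrt (by nlinarith)

lemma s13_sqrt_concave {u t : ℝ} (hu : 0 < u) (hut : 0 ≤ u + t) :
    Real.sqrt (u + t) ≤ Real.sqrt u + t/(2*Real.sqrt u) := by
  have hsu : 0 < Real.sqrt u := Real.sqrt_pos.mpr hu
  have hA : Real.sqrt (u+t) ^ 2 = u + t := Real.sq_sqrt hut
  have hB : Real.sqrt u ^ 2 = u := Real.sq_sqrt (le_of_lt hu)
  have key : 2 * Real.sqrt (u+t) * Real.sqrt u ≤ (u+t) + u := by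
    nlinarith [sq_nonneg (Real.sqrt (u+t) - Real.sqrt u)]
  have h2 : (Real.sqrt (u+t) - Real.sqrt u) * (2*Real.sqrt u) ≤ t := by nlinarith
  have h3 : Real.sqrt (u+t) - Real.sqrt u ≤ t/(2*Real.sqrt u) :=
    (le_div_iff₀ (by positivity)).mpr h2
  linarith

section Helpers5
variable {E : Type*} [NormedAddCommGroup E] [InnerProductSpace ℝ E] [ProperSpace E]
variable {Q M : Set E} {xb vb : E}

set_option maxHeartbeats 1000000 in
lemma s13_claimA (hQ : IsClosed Q) (hMQ : M ⊆ Q)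
    (hvb : vb ∈ frechetNormalCone Q xb)
    {ρ δ : ℝ} (hρ : 0 < ρ) (hδ : 0 < δ)
    (hident : ∀ z w, z ∈ Q → w ∈ limitingNormalCone Q z →
      dist z xb < ρ → dist w vb < δ → z ∈ M)
    {ε₀ r₀ : ℝ} (hε₀ : 0 < ε₀) (hr₀ : 0 < r₀)
    (hypM : ∀ x u, x ∈ M → u ∈ limitingNormalCone M x → dist x xb < ε₀ →
      dist u vb < ε₀ → ∀ y ∈ M, dist y xb ≤ ε₀ → ⟪u, y - x⟫ ≤ r₀/2 * ‖y - x‖^2) :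
    ∃ ε > (0:ℝ), ∃ τ > (0:ℝ), ∀ x v, x ∈ Q → v ∈ frechetNormalCone Q x →
      dist x xb < 2*ε → dist v vb < 2*ε →
      ∀ y ∈ Q, 2*τ*⟪v, y - x⟫ ≤ ‖y - x‖^2 := by
  classical
  obtain ⟨ρ', hρ'pos, hfre⟩ := hvb.2 (δ/100) (by positivity)
  obtain ⟨V, hVpos, hVvb⟩ : ∃ V : ℝ, 0 < V ∧ ‖vb‖ + 1 ≤ V := ⟨‖vb‖ + 1, by positivity, le_refl _⟩
  obtain ⟨ρ₁, hρ₁pos, hρ₁ρ', hρ₁ρ, hρ₁ε₀, hρ₁δ⟩ :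
      ∃ ρ₁ : ℝ, 0 < ρ₁ ∧ ρ₁ ≤ ρ'/2 ∧ ρ₁ ≤ ρ/2 ∧ ρ₁ ≤ ε₀/2 ∧ ρ₁ ≤ δ/(100*(r₀+1)) := by
    refine ⟨min (min (ρ'/2) (ρ/2)) (min (ε₀/2) (δ/(100*(r₀+1)))), ?_, ?_, ?_, ?_, ?_⟩
    · apply lt_min (lt_min (by positivity) (by positivity))
        (lt_min (by positivity) (by positivity))
    · exact le_trans (min_le_left _ _) (min_le_left _ _)
    · exact le_trans (min_le_left _ _) (min_le_right _ _)
    · exact le_trans (min_le_right _ _) (min_le_left _ _)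
    · exact le_trans (min_le_right _ _) (min_le_right _ _)
  obtain ⟨τ, hτpos, hτ1, hτ2⟩ :
      ∃ τ : ℝ, 0 < τ ∧ 2*τ*(r₀+1) ≤ 1 ∧ 100*(τ*V) ≤ ρ₁ := by
    refine ⟨min (1/(2*(r₀+1))) (ρ₁/(100*V)), lt_min (by positivity) (by positivity), ?_, ?_⟩
    · have h := min_le_left (1/(2*(r₀+1))) (ρ₁/(100*V))
      rw [le_div_iff₀ (by positivity)] at h
      linarith
    · have h := min_le_right (1/(2*(r₀+1))) (ρ₁/(100*V))
      rw [le_div_iff₀ (by positivity)] at h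
      linarith
  obtain ⟨ε, hεpos, hε1, hε2, hε3, hε4, hε5⟩ :
      ∃ ε : ℝ, 0 < ε ∧ ε ≤ δ/1000 ∧ ε ≤ ε₀/4 ∧ 2*(ε*(ρ₁+V)) ≤ ρ₁*(δ/100)/2
        ∧ ε ≤ ρ₁/1000 ∧ ε ≤ 1/2 := by
    refine ⟨min (min (δ/1000) (ε₀/4)) (min (ρ₁*(δ/100)/(4*(ρ₁+V))) (min (ρ₁/1000) (1/2))),
      ?_, ?_, ?_, ?_, ?_, ?_⟩
    · apply lt_min (lt_min (by positivity) (by positivity))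
      exact lt_min (by positivity) (lt_min (by positivity) (by norm_num))
    · exact le_trans (min_le_left _ _) (min_le_left _ _)
    · exact le_trans (min_le_left _ _) (min_le_right _ _)
    · have h := le_trans
        (min_le_right (min (δ/1000) (ε₀/4)) (min (ρ₁*(δ/100)/(4*(ρ₁+V))) (min (ρ₁/1000) (1/2))))
        (min_le_left (ρ₁*(δ/100)/(4*(ρ₁+V))) (min (ρ₁/1000) (1/2)))
      rw [le_div_iff₀ (by positivity)] at h
      linarith
    · exact le_trans (min_le_right _ _) (le_trans (min_le_right _ _) (min_le_left _ _))
    · exact le_trans (min_le_right _ _) (le_trans (min_le_right _ _) (min_le_right _ _))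
  refine ⟨ε, hεpos, τ, hτpos, fun x v hxQ hvF hx hv => ?_⟩
  by_contra hcon
  push_neg at hcon
  obtain ⟨y, hyQ, hyviol⟩ := hcon
  -- basic bounds
  have hvV : ‖v‖ ≤ V := by
    have h1 : ‖v‖ - ‖vb‖ ≤ ‖v - vb‖ := norm_sub_norm_le v vb
    have h2 : ‖v - vb‖ = dist v vb := (dist_eq_norm v vb).symm
    nlinarith
  have hvN : v ∈ limitingNormalCone Q x := s13_frechet_subset_limiting hvF
  have hδr : 0 < δ/(100*(r₀+1)) := by positivity
  have hρ₁δ' : 100*(ρ₁*(r₀+1)) ≤ δ := by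
    rw [le_div_iff₀ (by positivity)] at hρ₁δ
    linarith
  have hxM : x ∈ M := by
    apply hident x v hxQ hvN
    · nlinarith
    · nlinarith
  have hvMF : v ∈ frechetNormalCone M x := s13_frechet_antitone hMQ hxM hvF
  have hvMN : v ∈ limitingNormalCone M x := s13_frechet_subset_limiting hvMF
  have hypMx : ∀ y' ∈ M, dist y' xb ≤ ε₀ → ⟪v, y' - x⟫ ≤ r₀/2 * ‖y' - x‖^2 := by
    apply hypM x v hxM hvMN
    · nlinarith
    · nlinarith
  -- violator is close
  have hyx : ‖y - x‖ < 2*(τ*‖v‖) := by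
    have hip : ⟪v, y - x⟫ ≤ ‖v‖ * ‖y - x‖ := real_inner_le_norm v (y - x)
    have hy0 : 0 < ‖y - x‖ := by
      rcases eq_or_lt_of_le (norm_nonneg (y - x)) with h0 | h0
      · exfalso
        have hyx0 : y - x = 0 := norm_eq_zero.mp h0.symm
        rw [hyx0, inner_zero_right] at hyviol
        simp at hyviol
      · exact h0
    nlinarith
  -- the compact set
  set K₁ : Set E := Q ∩ Metric.closedBall xb ρ₁ with hK₁
  have hK₁cpt : IsCompact K₁ :=
    (isCompact_closedBall xb ρ₁).of_isClosed_subset (hQ.inter Metric.isClosed_closedBall)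
      inter_subset_right
  have hxK₁ : x ∈ K₁ := ⟨hxQ, Metric.mem_closedBall.mpr (by nlinarith)⟩
  have hτV : τ*‖v‖ ≤ τ*V := mul_le_mul_of_nonneg_left hvV (le_of_lt hτpos)
  have hyK₁ : y ∈ K₁ := by
    refine ⟨hyQ, Metric.mem_closedBall.mpr ?_⟩
    have h1 : dist y xb ≤ dist y x + dist x xb := dist_triangle y x xb
    have h2 : dist y x = ‖y - x‖ := dist_eq_norm y x
    nlinarith
  -- projection of x + τ v onto K₁
  set p : E := x + τ • v with hp
  obtain ⟨z₀, hz₀K₁, hz₀min'⟩ :=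
    hK₁cpt.exists_isMinOn ⟨x, hxK₁⟩ ((continuous_const.dist continuous_id).continuousOn)
  have hz₀min : ∀ q ∈ K₁, dist p z₀ ≤ dist p q := fun q hq => hz₀min' hq
  have hz₀Q : z₀ ∈ Q := hz₀K₁.1
  have hdpy2 : dist p y ^2 = τ^2*‖v‖^2 - 2*τ*⟪v, y - x⟫ + ‖y - x‖^2 := s13_dist_shift x y v τ
  have hsqe : (τ*‖v‖)^2 = τ^2*‖v‖^2 := by ring
  have hdpylt : dist p y ^2 < (τ*‖v‖)^2 := by linarith
  have hdpz_le : dist p z₀ ≤ dist p y := hz₀min y hyK₁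
  have hdpz_le2 : dist p z₀ ^2 ≤ dist p y ^2 := pow_le_pow_left₀ dist_nonneg hdpz_le 2
  have hdpzlt : dist p z₀ < τ*‖v‖ :=
    lt_of_pow_lt_pow_left₀ 2 (by positivity) (lt_of_le_of_lt hdpz_le2 hdpylt)
  have hdpz2 : dist p z₀ ^2 = τ^2*‖v‖^2 - 2*τ*⟪v, z₀ - x⟫ + ‖z₀ - x‖^2 := s13_dist_shift x z₀ v τ
  have hrise : ‖z₀ - x‖^2 < 2*τ*⟪v, z₀ - x⟫ := by nlinarith [dist_nonneg (x := p) (y := z₀)]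
  have hdpx : dist p x = τ*‖v‖ := s13_dist_self x v τ (le_of_lt hτpos)
  have hsz : ‖z₀ - x‖ < 2*(τ*‖v‖) := by
    have h1 : dist z₀ x ≤ dist z₀ p + dist p x := dist_triangle z₀ p x
    have h2 : dist z₀ p = dist p z₀ := dist_comm z₀ p
    have h3 : dist z₀ x = ‖z₀ - x‖ := dist_eq_norm z₀ x
    linarith
  have hτv2 : τ*‖v‖ ≤ τ*V := hτV
  have hz₀xb : dist z₀ xb < ρ₁ := by
    have h1 : dist z₀ xb ≤ dist z₀ x + dist x xb := dist_triangle z₀ x xb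
    have h3 : dist z₀ x = ‖z₀ - x‖ := dist_eq_norm z₀ x
    linarith
  by_cases hz₀M : z₀ ∈ M
  · -- z₀ ∈ M : contradiction via hypomonotonicity of M
    have h1 : ⟪v, z₀ - x⟫ ≤ r₀/2 * ‖z₀ - x‖^2 := by
      apply hypMx z₀ hz₀M
      linarith
    have hτr : τ*r₀ ≤ 1/2 := by
      have e1 : 2*τ*(r₀+1) = 2*(τ*r₀) + 2*τ := by ring
      linarith
    have h2 := mul_le_mul_of_nonneg_left h1 (by positivity : (0:ℝ) ≤ 2*τ)
    have h3 := mul_le_mul_of_nonneg_right hτr (sq_nonneg ‖z₀ - x‖)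
    have e2 : 2*τ*(r₀/2*‖z₀ - x‖^2) = (τ*r₀)*‖z₀ - x‖^2 := by ring
    have e3 : 1/2*‖z₀ - x‖^2 ≤ ‖z₀ - x‖^2/2 := by linarith [sq_nonneg ‖z₀ - x‖]
    nlinarith [sq_nonneg ‖z₀ - x‖]
  · -- z₀ ∉ M : one-shot tilted maximization
    have hτne : τ ≠ 0 := ne_of_gt hτpos
    set ω₀ : E := τ⁻¹ • (p - z₀) with hω₀
    have hτinvpos : (0:ℝ) < τ⁻¹ := by positivity
    have hω₀quad : ∀ q ∈ Q, dist q z₀ < ρ₁ - dist z₀ xb → ⟪ω₀, q - z₀⟫ ≤ (τ⁻¹/2) * ‖q - z₀‖^2 := by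
      intro q hqQ hq
      have hqK₁ : q ∈ K₁ := by
        refine ⟨hqQ, Metric.mem_closedBall.mpr ?_⟩
        have := dist_triangle q z₀ xb
        linarith
      have hle := hz₀min q hqK₁
      have hle2 : dist p z₀ ^2 ≤ dist p q ^2 := pow_le_pow_left₀ dist_nonneg hle 2
      have hexp : dist p q ^2 = dist p z₀ ^2 - 2*⟪p - z₀, q - z₀⟫ + ‖q - z₀‖^2 := by
        have hv1 : p - q = (p - z₀) - (q - z₀) := by abel
        rw [dist_eq_norm, dist_eq_norm, hv1, norm_sub_sq_real]
      have hI : ⟪p - z₀, q - z₀⟫ ≤ ‖q - z₀‖^2/2 := by linarith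
      have hIP : ⟪ω₀, q - z₀⟫ = τ⁻¹ * ⟪p - z₀, q - z₀⟫ := real_inner_smul_left _ _ _
      have h2 := mul_le_mul_of_nonneg_left hI (le_of_lt hτinvpos)
      have e : τ⁻¹*(‖q - z₀‖^2/2) = τ⁻¹/2*‖q - z₀‖^2 := by ring
      linarith [hIP ▸ h2]
    have hω₀F : ω₀ ∈ frechetNormalCone Q z₀ :=
      s13_mem_frechet_of_quad hz₀Q (by linarith) hω₀quad
    have hω₀v : ω₀ - v = τ⁻¹ • (x - z₀) := by
      have h1 : p - z₀ = (x - z₀) + τ • v := by rw [hp]; abel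
      rw [hω₀, h1, smul_add, smul_smul, inv_mul_cancel₀ hτne, one_smul]
      abel
    have hdω₀v : dist ω₀ v = τ⁻¹ * ‖z₀ - x‖ := by
      rw [dist_eq_norm, hω₀v, norm_smul, Real.norm_eq_abs, abs_of_pos hτinvpos, norm_sub_rev]
    have hfar : δ ≤ dist ω₀ vb := by
      by_contra hcl
      push_neg at hcl
      exact hz₀M (hident z₀ ω₀ hz₀Q (s13_frechet_subset_limiting hω₀F) (by linarith) hcl)
    have hτinv : τ*τ⁻¹ = 1 := mul_inv_cancel₀ hτne
    have hsl : τ*(δ/2) ≤ ‖z₀ - x‖ := by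
      have h1 : dist ω₀ vb ≤ dist ω₀ v + dist v vb := dist_triangle ω₀ v vb
      have h2 : δ - 2*ε ≤ τ⁻¹ * ‖z₀ - x‖ := by linarith
      have h3 := mul_le_mul_of_nonneg_left h2 (le_of_lt hτpos)
      have h4 : τ*(τ⁻¹*‖z₀ - x‖) = ‖z₀ - x‖ := by rw [← mul_assoc, hτinv, one_mul]
      have h5 := mul_le_mul_of_nonneg_left hε1 (le_of_lt hτpos)
      have e : τ*(δ - 2*ε) = τ*δ - 2*(τ*ε) := by ring
      have e2 : τ*(δ/2) = τ*δ/2 := by ring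
      have e3 : τ*(δ/1000) = τ*δ/1000 := by ring
      have hτδ : 0 ≤ τ*δ := by positivity
      linarith
    have hrise2 : δ/4 * ‖z₀ - x‖ < ⟪v, z₀ - x⟫ := by
      have hss := mul_le_mul_of_nonneg_right hsl (norm_nonneg (z₀ - x))
      have e1 : ‖z₀ - x‖*‖z₀ - x‖ = ‖z₀ - x‖^2 := by ring
      have h1 : τ*((δ/2)*‖z₀ - x‖) < τ*(2*⟪v, z₀ - x⟫) := by
        have e2 : τ*((δ/2)*‖z₀ - x‖) = τ*(δ/2)*‖z₀ - x‖ := by ring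
        have e3 : τ*(2*⟪v, z₀ - x⟫) = 2*τ*⟪v, z₀ - x⟫ := by ring
        linarith
      have h2 := lt_of_mul_lt_mul_left h1 (le_of_lt hτpos)
      linarith
    -- tilted functional
    set σ : ℝ := τ*(δ/100) with hσdef
    have hσpos : 0 < σ := by positivity
    set g : E → ℝ := fun q => Real.sqrt (σ^2 + ‖q - x‖^2) with hg
    set φ : E → ℝ := fun q => ⟪v, q - x⟫ - (δ/8) * g q with hφ
    have hφcont : ContinuousOn φ K₁ := by
      apply Continuous.continuousOn
      apply Continuous.sub
      · exact Continuous.inner continuous_const (continuous_id.sub continuous_const)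
      · exact continuous_const.mul (Real.continuous_sqrt.comp
          (continuous_const.add ((continuous_id.sub continuous_const).norm.pow 2)))
    obtain ⟨w, hwK₁, hwmax'⟩ := hK₁cpt.exists_isMaxOn ⟨x, hxK₁⟩ hφcont
    have hwmax : ∀ q ∈ K₁, φ q ≤ φ w := fun q hq => hwmax' hq
    have hwQ : w ∈ Q := hwK₁.1
    have hwb : dist w xb ≤ ρ₁ := Metric.mem_closedBall.mp hwK₁.2
    set G : ℝ := g w with hGdef
    set a : ℝ := ‖w - x‖ with hadef
    have hGform : G = Real.sqrt (σ^2 + a^2) := rfl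
    have hGσ : σ ≤ G := by rw [hGform]; exact s13_le_sqrt_left (le_of_lt hσpos)
    have hGa : a ≤ G := by rw [hGform]; exact s13_le_sqrt_right (norm_nonneg _)
    have hGpos : 0 < G := lt_of_lt_of_le hσpos hGσ
    have hanneg : 0 ≤ a := norm_nonneg _
    -- lower bound for the max value
    have hσs : σ ≤ ‖z₀ - x‖/50 := by
      have e1 : σ = (τ*δ)/100 := by rw [hσdef]; ring
      have e2 : τ*(δ/2) = (τ*δ)/2 := by ring
      linarith
    have hgz₀ : g z₀ ≤ σ + ‖z₀ - x‖ := s13_sqrt_add_le (le_of_lt hσpos) (norm_nonneg _)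
    have hφz₀ : τ*(δ^2)/20 ≤ φ z₀ := by
      have h1 : φ z₀ = ⟪v, z₀ - x⟫ - (δ/8) * g z₀ := rfl
      have f1 := mul_le_mul_of_nonneg_left hgz₀ (by positivity : (0:ℝ) ≤ δ/8)
      have f2 := mul_le_mul_of_nonneg_left hσs (by positivity : (0:ℝ) ≤ δ/8)
      have f3 := mul_le_mul_of_nonneg_left hsl (by positivity : (0:ℝ) ≤ δ/10)
      have e1 : δ/10*(τ*(δ/2)) = τ*(δ^2)/20 := by ring
      have e2 : δ/8*(σ + ‖z₀ - x‖) = δ/8*σ + δ/8*‖z₀ - x‖ := by ring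
      have e3 : δ/8*(‖z₀ - x‖/50) = δ/400*‖z₀ - x‖ := by ring
      have e4 : δ/10*‖z₀ - x‖ ≤ δ/4*‖z₀ - x‖ - δ/8*‖z₀ - x‖ - δ/400*‖z₀ - x‖ := by
        have : (0:ℝ) ≤ δ*‖z₀ - x‖ := by positivity
        linarith
      linarith
    have hφw : τ*(δ^2)/20 ≤ φ w := le_trans hφz₀ (hwmax z₀ hz₀K₁)
    have hrisew : ⟪v, w - x⟫ = φ w + (δ/8) * G := by
      simp only [hφ]
      ring
    have hwlow : τ*(δ^2)/20 + (δ/8)*a ≤ ⟪v, w - x⟫ := by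
      have f1 := mul_le_mul_of_nonneg_left hGa (by positivity : (0:ℝ) ≤ δ/8)
      linarith
    -- the cap
    have hcap : ⟪v, w - x⟫ ≤ 2*(δ/100)*ρ₁ := by
      have hsplit : ⟪v, w - x⟫ = ⟪vb, w - xb⟫ + ⟪v - vb, w - xb⟫ + ⟪v, xb - x⟫ := by
        have h1 : w - x = (w - xb) + (xb - x) := by abel
        rw [h1, inner_add_right]
        have h2 : ⟪v, w - xb⟫ = ⟪vb, w - xb⟫ + ⟪v - vb, w - xb⟫ := by
          rw [← inner_add_left]
          congr 1
          abel
        linarith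
      have hwxbn : ‖w - xb‖ ≤ ρ₁ := by rw [← dist_eq_norm]; exact hwb
      have h1 : ⟪vb, w - xb⟫ ≤ δ/100 * ρ₁ := by
        have hf := hfre w hwQ (by linarith : dist w xb < ρ')
        have hwn : ‖w - xb‖ = dist w xb := (dist_eq_norm w xb).symm
        have := mul_le_mul_of_nonneg_left hwxbn (by positivity : (0:ℝ) ≤ δ/100)
        linarith
      have h2 : ⟪v - vb, w - xb⟫ ≤ 2*ε*ρ₁ := by
        have hi := real_inner_le_norm (v - vb) (w - xb)
        have hn : ‖v - vb‖ = dist v vb := (dist_eq_norm v vb).symm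
        have hp1 : ‖v - vb‖*‖w - xb‖ ≤ (2*ε)*ρ₁ := by
          apply mul_le_mul _ hwxbn (norm_nonneg _) (by positivity)
          rw [hn]; linarith
        linarith
      have h3 : ⟪v, xb - x⟫ ≤ V*(2*ε) := by
        have hi := real_inner_le_norm v (xb - x)
        have hn : ‖xb - x‖ = dist x xb := by rw [← dist_eq_norm, dist_comm]
        have hp1 : ‖v‖*‖xb - x‖ ≤ V*(2*ε) := by
          apply mul_le_mul hvV _ (norm_nonneg _) (le_of_lt hVpos)
          rw [hn]; linarith
        linarith
      have e : 2*ε*ρ₁ + V*(2*ε) = 2*(ε*(ρ₁+V)) := by ring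
      have hδρ₁ : 0 ≤ δ*ρ₁ := by positivity
      linarith
    have ha_ub : a ≤ 16*ρ₁/100 := by
      by_contra hcc
      push_neg at hcc
      have h1 := mul_lt_mul_of_pos_left hcc (by positivity : (0:ℝ) < δ/8)
      have e : δ/8*(16*ρ₁/100) = 2*(δ/100)*ρ₁ := by ring
      have hT : 0 < τ*(δ^2)/20 := by positivity
      linarith
    have hwxb : dist w xb < ρ₁ := by
      have h1 : dist w xb ≤ dist w x + dist x xb := dist_triangle w x xb
      have h2 : dist w x = a := dist_eq_norm w x
      linarith
    -- the perturbed vector is a Fréchet normal at w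
    set tv : E := v - ((δ/8)*G⁻¹) • (w - x) with htv
    have htvF : tv ∈ frechetNormalCone Q w := by
      apply s13_mem_frechet_of_quad hwQ (ι := ρ₁ - dist w xb) (by linarith)
        (c := (δ/8)/(2*σ))
      intro q hqQ hq
      have hqK₁ : q ∈ K₁ := by
        refine ⟨hqQ, Metric.mem_closedBall.mpr ?_⟩
        have := dist_triangle q w xb
        linarith
      have hφq := hwmax q hqK₁
      have hIq : ⟪v, q - x⟫ - ⟪v, w - x⟫ = ⟪v, q - w⟫ := by
        rw [← inner_sub_right]
        congr 1
        abel
      have hvqw : ⟪v, q - w⟫ ≤ (δ/8) * (g q - G) := by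
        have hφq' : ⟪v, q - x⟫ - (δ/8) * g q ≤ ⟪v, w - x⟫ - (δ/8) * G := by
          simp only [hφ] at hφq
          exact hφq
        have e : (δ/8) * (g q - G) = (δ/8)*g q - (δ/8)*G := by ring
        linarith
      have hexp : ‖q - x‖^2 = a^2 + (2*⟪w - x, q - w⟫ + ‖q - w‖^2) := by
        have h1 : q - x = (w - x) + (q - w) := by abel
        rw [h1, norm_add_sq_real]
        ring
      have hgq : g q ≤ G + (2*⟪w - x, q - w⟫ + ‖q - w‖^2)/(2*G) := by
        have h2 : (0:ℝ) ≤ (σ^2 + a^2) + (2*⟪w - x, q - w⟫ + ‖q - w‖^2) := by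
          have he : (σ^2 + a^2) + (2*⟪w - x, q - w⟫ + ‖q - w‖^2) = σ^2 + ‖q - x‖^2 := by
            rw [hexp]; ring
          rw [he]; positivity
        have h3 := s13_sqrt_concave (u := σ^2 + a^2) (by positivity) h2
        rw [← hGform] at h3
        have h1 : g q = Real.sqrt ((σ^2 + a^2) + (2*⟪w - x, q - w⟫ + ‖q - w‖^2)) := by
          simp only [hg]
          congr 1
          rw [hexp]; ring
        rw [h1]
        exact h3
      have htvip : ⟪tv, q - w⟫ = ⟪v, q - w⟫ - (δ/8)*G⁻¹*⟪w - x, q - w⟫ := by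
        rw [htv, inner_sub_left, real_inner_smul_left]
      have hGne : G ≠ 0 := ne_of_gt hGpos
      have hdiv : (2*⟪w - x, q - w⟫ + ‖q - w‖^2)/(2*G) - G⁻¹*⟪w - x, q - w⟫
          = ‖q - w‖^2/(2*G) := by
        field_simp
        ring
      have f0 : g q - G ≤ (2*⟪w - x, q - w⟫ + ‖q - w‖^2)/(2*G) := by linarith
      have f1 := mul_le_mul_of_nonneg_left f0 (by positivity : (0:ℝ) ≤ δ/8)
      have f2 : (δ/8)*((2*⟪w - x, q - w⟫ + ‖q - w‖^2)/(2*G)) - (δ/8)*(G⁻¹*⟪w - x, q - w⟫)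
          = (δ/8)*(‖q - w‖^2/(2*G)) := by
        rw [← mul_sub, hdiv]
      have hkey : ⟪tv, q - w⟫ ≤ (δ/8) * (‖q - w‖^2/(2*G)) := by
        rw [htvip]
        have e : (δ/8)*G⁻¹*⟪w - x, q - w⟫ = (δ/8)*(G⁻¹*⟪w - x, q - w⟫) := by ring
        linarith
      have hmono : ‖q - w‖^2/(2*G) ≤ ‖q - w‖^2/(2*σ) := by
        gcongr
      have f3 := mul_le_mul_of_nonneg_left hmono (by positivity : (0:ℝ) ≤ δ/8)
      have e2 : (δ/8)*(‖q - w‖^2/(2*σ)) = (δ/8)/(2*σ)*‖q - w‖^2 := by ring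
      linarith
    have htvv : dist tv v ≤ δ/8 := by
      have h1 : tv - v = -(((δ/8)*G⁻¹) • (w - x)) := by rw [htv]; abel
      have h2 : dist tv v = (δ/8)*G⁻¹*a := by
        rw [dist_eq_norm, h1, norm_neg, norm_smul, Real.norm_eq_abs,
          abs_of_pos (by positivity)]
      have h3 : G⁻¹*a ≤ 1 := by
        have h4 := mul_le_mul_of_nonneg_left hGa (le_of_lt (inv_pos.mpr hGpos))
        rw [inv_mul_cancel₀ (ne_of_gt hGpos)] at h4
        exact h4
      have h5 := mul_le_mul_of_nonneg_left h3 (by positivity : (0:ℝ) ≤ δ/8)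
      have e : (δ/8)*G⁻¹*a = (δ/8)*(G⁻¹*a) := by ring
      linarith
    have htvvb : dist tv vb < δ := by
      have h1 : dist tv vb ≤ dist tv v + dist v vb := dist_triangle tv v vb
      linarith
    have hwM : w ∈ M :=
      hident w tv hwQ (s13_frechet_subset_limiting htvF) (by linarith) htvvb
    have hhyp : ⟪v, w - x⟫ ≤ r₀/2 * a^2 := by
      apply hypMx w hwM
      linarith
    have ha3 : (r₀+1)*a ≤ (16/10000)*δ := by
      have h1 : (r₀+1)*a ≤ (r₀+1)*(16*ρ₁/100) :=
        mul_le_mul_of_nonneg_left ha_ub (by positivity)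
      have e : (r₀+1)*(16*ρ₁/100) = (16/100)*(ρ₁*(r₀+1)) := by ring
      linarith
    have hf := mul_le_mul_of_nonneg_right ha3 hanneg
    have hT : 0 < τ*(δ^2)/20 := by positivity
    have hδa : 0 ≤ δ*a := by positivity
    have e1 : (r₀+1)*a*a = r₀*a^2 + a^2 := by ring
    have e2 : (16/10000)*δ*a = (16/10000)*(δ*a) := by ring
    have e3 : δ/8*a = (1/8)*(δ*a) := by ring
    linarith [sq_nonneg a]

end Helpers5

section Helpers6
variable {E : Type*} [NormedAddCommGroup E] [InnerProductSpace ℝ E] [ProperSpace E]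
variable {Q M : Set E} {xb vb : E}

set_option maxHeartbeats 1000000 in
lemma s13_lemC (hQ : IsClosed Q) (hMQ : M ⊆ Q)
    {ρ δ : ℝ} (hρ : 0 < ρ) (hδ : 0 < δ)
    (hident : ∀ z w, z ∈ Q → w ∈ limitingNormalCone Q z →
      dist z xb < ρ → dist w vb < δ → z ∈ M)
    {εQ rQ : ℝ} (hεQ : 0 < εQ) (hrQ : 0 < rQ)
    (hypQ : ∀ x u, x ∈ Q → u ∈ limitingNormalCone Q x → dist x xb < εQ →
      dist u vb < εQ → ∀ y ∈ Q, dist y xb ≤ εQ → ⟪u, y - x⟫ ≤ rQ/2 * ‖y - x‖^2)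
    {θ ρθ : ℝ} (hθpos : 0 < θ) (hθδ : θ ≤ δ/16) (hθεQ : θ < εQ) (hρθ : 0 < ρθ)
    (hsel : ∀ z ∈ M, dist z xb < ρθ → ∃ u ∈ limitingNormalCone Q z, dist u vb < θ) :
    ∃ ρC > (0:ℝ), ∀ x w, x ∈ M → w ∈ frechetNormalCone M x → dist x xb < ρC →
      dist w vb < δ/16 → w ∈ limitingNormalCone Q x := by
  classical
  obtain ⟨ρC, hρCpos, hρC1, hρC2, hρC3⟩ :
      ∃ ρC : ℝ, 0 < ρC ∧ ρC ≤ ρθ ∧ ρC ≤ εQ/4 ∧ ρC ≤ ρ/2 := by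
    refine ⟨min (min ρθ (εQ/4)) (ρ/2), ?_, ?_, ?_, ?_⟩
    · exact lt_min (lt_min hρθ (by positivity)) (by positivity)
    · exact le_trans (min_le_left _ _) (min_le_left _ _)
    · exact le_trans (min_le_left _ _) (min_le_right _ _)
    · exact min_le_right _ _
  refine ⟨ρC, hρCpos, fun x w hxM hwF hx hw => ?_⟩
  have hxQ : x ∈ Q := hMQ hxM
  obtain ⟨vx, hvxN, hvxθ⟩ := hsel x hxM (lt_of_lt_of_le hx hρC1)
  have hypQx : ∀ y ∈ Q, dist y xb ≤ εQ → ⟪vx, y - x⟫ ≤ rQ/2 * ‖y - x‖^2 :=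
    hypQ x vx hxQ hvxN (by linarith) (by linarith)
  obtain ⟨B, hBpos, hB⟩ : ∃ B : ℝ, 0 < B ∧ B = δ/16 + θ := ⟨δ/16 + θ, by positivity, rfl⟩
  have hwvx : ‖w - vx‖ ≤ B := by
    have h1 : dist w vx ≤ dist w vb + dist vb vx := dist_triangle w vb vx
    have h2 : dist vb vx = dist vx vb := dist_comm vb vx
    have h3 : ‖w - vx‖ = dist w vx := (dist_eq_norm w vx).symm
    linarith
  have key : ∀ j : ℕ, ∃ ζ ω : E, ω ∈ frechetNormalCone Q ζ ∧
      dist ζ x ≤ 2/(j+1) ∧ dist ω w ≤ 2/(j+1) := by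
    intro j
    obtain ⟨ρ₅, hρ₅pos, hfreM⟩ := hwF.2 (1/(j+1)) (by positivity)
    obtain ⟨lam, hlampos, hlam1, hlam2, hlam3, hlam4, hlam5⟩ :
        ∃ lam : ℝ, 0 < lam ∧ 2*lam*(rQ+1) ≤ 1 ∧ 8*(lam*B) ≤ ρ₅ ∧
          4*(lam*(‖w‖+1)) ≤ εQ ∧ 16*(lam*B) ≤ ρ ∧ lam ≤ 1 := by
      set m1 : ℝ := min (1/(2*(rQ+1))) (ρ₅/(8*B)) with hm1
      set m2 : ℝ := min (εQ/(4*(‖w‖+1))) (min (ρ/(16*B)) 1) with hm2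
      refine ⟨min m1 m2, ?_, ?_, ?_, ?_, ?_, ?_⟩
      · rw [hm1, hm2]
        exact lt_min (lt_min (by positivity) (by positivity))
          (lt_min (by positivity) (lt_min (by positivity) one_pos))
      · have h : min m1 m2 ≤ 1/(2*(rQ+1)) :=
          le_trans (min_le_left m1 m2) (hm1 ▸ min_le_left _ _)
        rw [le_div_iff₀ (by positivity)] at h
        linarith
      · have h : min m1 m2 ≤ ρ₅/(8*B) :=
          le_trans (min_le_left m1 m2) (hm1 ▸ min_le_right _ _)
        rw [le_div_iff₀ (by positivity)] at h
        linarith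
      · have h : min m1 m2 ≤ εQ/(4*(‖w‖+1)) :=
          le_trans (min_le_right m1 m2) (hm2 ▸ min_le_left _ _)
        rw [le_div_iff₀ (by positivity)] at h
        linarith
      · have h : min m1 m2 ≤ ρ/(16*B) :=
          le_trans (min_le_right m1 m2)
            (hm2 ▸ le_trans (min_le_right (εQ/(4*(‖w‖+1))) _) (min_le_left _ _))
        rw [le_div_iff₀ (by positivity)] at h
        linarith
      · exact le_trans (min_le_right m1 m2)
          (hm2 ▸ le_trans (min_le_right _ _) (min_le_right _ _))
    have hlamne : lam ≠ 0 := ne_of_gt hlampos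
    have hlaminv : lam*lam⁻¹ = 1 := mul_inv_cancel₀ hlamne
    have hlaminvpos : (0:ℝ) < lam⁻¹ := by positivity
    set p : E := x + lam • w with hp
    set K : Set E := Q ∩ Metric.closedBall xb εQ with hK
    have hKcpt : IsCompact K :=
      (isCompact_closedBall xb εQ).of_isClosed_subset (hQ.inter Metric.isClosed_closedBall)
        inter_subset_right
    have hxK : x ∈ K := ⟨hxQ, Metric.mem_closedBall.mpr (by linarith)⟩
    obtain ⟨ζ, hζK, hζmin'⟩ :=
      hKcpt.exists_isMinOn ⟨x, hxK⟩ ((continuous_const.dist continuous_id).continuousOn)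
    have hζmin : ∀ q ∈ K, dist p ζ ≤ dist p q := fun q hq => hζmin' hq
    have hζQ : ζ ∈ Q := hζK.1
    have hdpx : dist p x = lam*‖w‖ := s13_dist_self x w lam (le_of_lt hlampos)
    have hdple : dist p ζ ≤ dist p x := hζmin x hxK
    have hdpζ2 : dist p ζ ^2 = lam^2*‖w‖^2 - 2*lam*⟪w, ζ - x⟫ + ‖ζ - x‖^2 :=
      s13_dist_shift x ζ w lam
    have hsqe : (lam*‖w‖)^2 = lam^2*‖w‖^2 := by ring
    have hdple2 : dist p ζ ^2 ≤ (lam*‖w‖)^2 := by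
      rw [← hdpx]
      exact pow_le_pow_left₀ dist_nonneg hdple 2
    have hA : ‖ζ - x‖^2 ≤ 2*lam*⟪w, ζ - x⟫ := by linarith
    have hsx : ‖ζ - x‖ ≤ 2*(lam*‖w‖) := by
      have h1 : dist ζ x ≤ dist ζ p + dist p x := dist_triangle ζ p x
      have h2 : dist ζ p = dist p ζ := dist_comm ζ p
      have h3 : dist ζ x = ‖ζ - x‖ := dist_eq_norm ζ x
      have h4 : dist p ζ ≤ lam*‖w‖ := by rw [← hdpx]; exact hdple
      linarith
    have hζxb : dist ζ xb < εQ := by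
      have h1 : dist ζ xb ≤ dist ζ x + dist x xb := dist_triangle ζ x xb
      have h3 : dist ζ x = ‖ζ - x‖ := dist_eq_norm ζ x
      have h5 : lam*‖w‖ ≤ lam*(‖w‖+1) := by nlinarith
      linarith
    have hcap : ⟪w, ζ - x⟫ ≤ rQ/2*‖ζ - x‖^2 + B*‖ζ - x‖ := by
      have h1 : ⟪w, ζ - x⟫ = ⟪vx, ζ - x⟫ + ⟪w - vx, ζ - x⟫ := by
        rw [← inner_add_left]
        congr 1
        abel
      have h2 := hypQx ζ hζQ (le_of_lt hζxb)
      have h3 := real_inner_le_norm (w - vx) (ζ - x)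
      have h4 : ‖w - vx‖*‖ζ - x‖ ≤ B*‖ζ - x‖ :=
        mul_le_mul_of_nonneg_right hwvx (norm_nonneg _)
      linarith
    have hlamrQ : lam*rQ ≤ 1/2 := by
      have e : 2*lam*(rQ+1) = 2*(lam*rQ) + 2*lam := by ring
      linarith
    have hs4B : ‖ζ - x‖ ≤ 4*(lam*B) := by
      by_contra hcc
      push_neg at hcc
      have hspos : 0 < ‖ζ - x‖ := lt_of_le_of_lt (by positivity) hcc
      have h1 : ‖ζ - x‖^2 ≤ 2*lam*(rQ/2*‖ζ - x‖^2 + B*‖ζ - x‖) := by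
        have := mul_le_mul_of_nonneg_left hcap (by positivity : (0:ℝ) ≤ 2*lam)
        linarith
      nlinarith [mul_le_mul_of_nonneg_right hlamrQ (sq_nonneg ‖ζ - x‖),
        mul_lt_mul_of_pos_right hcc hspos]
    -- ζ has a proximal normal
    set ω : E := lam⁻¹ • (p - ζ) with hω
    have hωquad : ∀ q ∈ Q, dist q ζ < εQ - dist ζ xb →
        ⟪ω, q - ζ⟫ ≤ (lam⁻¹/2) * ‖q - ζ‖^2 := by
      intro q hqQ hq
      have hqK : q ∈ K := by
        refine ⟨hqQ, Metric.mem_closedBall.mpr ?_⟩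
        have := dist_triangle q ζ xb
        linarith
      have hle := hζmin q hqK
      have hle2 : dist p ζ ^2 ≤ dist p q ^2 := pow_le_pow_left₀ dist_nonneg hle 2
      have hexp : dist p q ^2 = dist p ζ ^2 - 2*⟪p - ζ, q - ζ⟫ + ‖q - ζ‖^2 := by
        have hv1 : p - q = (p - ζ) - (q - ζ) := by abel
        rw [dist_eq_norm, dist_eq_norm, hv1, norm_sub_sq_real]
      have hI : ⟪p - ζ, q - ζ⟫ ≤ ‖q - ζ‖^2/2 := by linarith
      have hIP : ⟪ω, q - ζ⟫ = lam⁻¹ * ⟪p - ζ, q - ζ⟫ := real_inner_smul_left _ _ _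
      have h2 := mul_le_mul_of_nonneg_left hI (le_of_lt hlaminvpos)
      have e : lam⁻¹*(‖q - ζ‖^2/2) = lam⁻¹/2*‖q - ζ‖^2 := by ring
      linarith [hIP ▸ h2]
    have hωF : ω ∈ frechetNormalCone Q ζ :=
      s13_mem_frechet_of_quad hζQ (by linarith) hωquad
    have hωw : ω - w = lam⁻¹ • (x - ζ) := by
      have h1 : p - ζ = (x - ζ) + lam • w := by rw [hp]; abel
      rw [hω, h1, smul_add, smul_smul, inv_mul_cancel₀ hlamne, one_smul]
      abel
    have hdωw : dist ω w = lam⁻¹ * ‖ζ - x‖ := by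
      rw [dist_eq_norm, hωw, norm_smul, Real.norm_eq_abs, abs_of_pos hlaminvpos, norm_sub_rev]
    have hdωw4B : dist ω w ≤ 4*B := by
      rw [hdωw]
      have h1 := mul_le_mul_of_nonneg_left hs4B (le_of_lt hlaminvpos)
      have e : lam⁻¹*(4*(lam*B)) = 4*B*(lam*lam⁻¹) := by ring
      rw [e, hlaminv] at h1
      linarith
    have hζM : ζ ∈ M := by
      apply hident ζ ω hζQ (s13_frechet_subset_limiting hωF)
      · have h1 : dist ζ xb ≤ dist ζ x + dist x xb := dist_triangle ζ x xb
        have h3 : dist ζ x = ‖ζ - x‖ := dist_eq_norm ζ x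
        linarith
      · have h1 : dist ω vb ≤ dist ω w + dist w vb := dist_triangle ω w vb
        have hBδ : B ≤ δ/8 := by linarith
        linarith
    -- improve the estimate using the Fréchet property of w on M
    have hfreζ : ⟪w, ζ - x⟫ ≤ (1/(j+1))*‖ζ - x‖ := by
      apply hfreM ζ hζM
      have h3 : dist ζ x = ‖ζ - x‖ := dist_eq_norm ζ x
      linarith
    have hfin : ‖ζ - x‖ ≤ 2*lam*(1/(j+1)) := by
      by_contra hcc
      push_neg at hcc
      have hspos : 0 < ‖ζ - x‖ := lt_of_le_of_lt (by positivity) hcc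
      have h1 := mul_le_mul_of_nonneg_left hfreζ (by positivity : (0:ℝ) ≤ 2*lam)
      nlinarith [mul_lt_mul_of_pos_right hcc hspos]
    refine ⟨ζ, ω, hωF, ?_, ?_⟩
    · have h3 : dist ζ x = ‖ζ - x‖ := dist_eq_norm ζ x
      have hj : (0:ℝ) < 1/(j+1) := by positivity
      have : 2*lam*(1/(j+1)) ≤ 2*(1/(j+1)) := by nlinarith
      have e : 2*(1/((j:ℝ)+1)) = 2/(j+1) := by ring
      linarith
    · rw [hdωw]
      have h1 := mul_le_mul_of_nonneg_left hfin (le_of_lt hlaminvpos)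
      have e : lam⁻¹*(2*lam*(1/(j+1))) = 2*(1/((j:ℝ)+1))*(lam*lam⁻¹) := by ring
      rw [e, hlaminv] at h1
      have e2 : 2*(1/((j:ℝ)+1))*1 = 2/(j+1) := by ring
      linarith
  choose ζs ωs hωsF hζd hωd using key
  have hz2 : Filter.Tendsto (fun j : ℕ => (2:ℝ)/(j+1)) Filter.atTop (nhds 0) := by
    have := tendsto_one_div_add_atTop_nhds_zero_nat (𝕜 := ℝ)
    have h2 := this.const_mul (2:ℝ)
    simpa [div_eq_mul_inv, mul_comm] using h2
  have hζt : Filter.Tendsto ζs Filter.atTop (nhds x) := by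
    rw [tendsto_iff_dist_tendsto_zero]
    exact squeeze_zero (fun j => dist_nonneg) hζd hz2
  have hωt : Filter.Tendsto ωs Filter.atTop (nhds w) := by
    rw [tendsto_iff_dist_tendsto_zero]
    exact squeeze_zero (fun j => dist_nonneg) hωd hz2
  exact ⟨ζs, ωs, hωsF, hζt, hωt⟩

end Helpers6

/-- prox-regularity under local minimality. -/
theorem statement13 {n : ℕ} (Q : Set (Euc n)) (hQ : IsClosed Q)
    (M : Set (Euc n)) (hMQ : M ⊆ Q) (xb vb : Euc n)
    (hvb : vb ∈ frechetNormalCone Q xb)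
    (hmin : LocallyMinimalIdentifiableIn Q M xb vb) :
    ProxRegularAt Q xb vb ↔ ProxRegularAt M xb vb := by
  obtain ⟨ρ, hρ, δ, hδ, hident⟩ := s13_ident_balls hmin.1
  constructor
  · -- Q prox-regular → M prox-regular
    intro hPRQ
    obtain ⟨εQ, hεQ, rQ, hrQ, hypQ⟩ := s13_hyp_from_PR hPRQ
    obtain ⟨θ, hθpos, hθδ, hθεQ⟩ : ∃ θ : ℝ, 0 < θ ∧ θ ≤ δ/16 ∧ θ < εQ :=
      ⟨min (δ/16) (εQ/2), lt_min (by positivity) (by positivity), min_le_left _ _,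
        lt_of_le_of_lt (min_le_right _ _) (by linarith)⟩
    obtain ⟨ρθ, hρθ, hsel⟩ := s13_selection hmin θ hθpos
    obtain ⟨ρC, hρC, hC⟩ :=
      s13_lemC hQ hMQ hρ hδ hident hεQ hrQ hypQ hθpos hθδ hθεQ hρθ hsel
    obtain ⟨hLC, εP, hεP, rP, hrP, hPR⟩ := hPRQ
    have hClim : ∀ x u, x ∈ M → u ∈ limitingNormalCone M x → dist x xb < ρC/2 →
        dist u vb < δ/32 → u ∈ limitingNormalCone Q x := by
      intro x u hxM huN hx hu
      obtain ⟨xs, us, hF, hxs, hus⟩ := huN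
      have hev : ∀ᶠ j in Filter.atTop,
          dist (xs j) xb < ρC ∧ dist (us j) vb < δ/16 := by
        have h1 := (Metric.tendsto_nhds.mp hxs) (ρC/2 - dist x xb) (by linarith)
        have h2 := (Metric.tendsto_nhds.mp hus) (δ/32) (by positivity)
        filter_upwards [h1, h2] with j hj1 hj2
        constructor
        · have := dist_triangle (xs j) x xb
          linarith
        · have := dist_triangle (us j) u vb
          linarith
      obtain ⟨N, hN⟩ := Filter.eventually_atTop.mp hev
      have hxs' : Filter.Tendsto (fun j => xs (j + N)) Filter.atTop (nhds x) :=
        hxs.comp (tendsto_add_atTop_nat N)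
      have hus' : Filter.Tendsto (fun j => us (j + N)) Filter.atTop (nhds u) :=
        hus.comp (tendsto_add_atTop_nat N)
      refine s13_limiting_osc hxs' (fun j => ?_) hus'
      exact hC (xs (j + N)) (us (j + N)) (hF (j + N)).1
        (hF (j + N)) (hN (j + N) (Nat.le_add_left N j)).1 (hN (j + N) (Nat.le_add_left N j)).2
    refine ⟨s13_M_locally_closed hQ hMQ hmin, ?_⟩
    obtain ⟨εB, hεBpos, hεB1, hεB2, hεB3⟩ :
        ∃ εB : ℝ, 0 < εB ∧ εB ≤ ρC/2 ∧ εB ≤ δ/32 ∧ εB ≤ εP := by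
      refine ⟨min (min (ρC/2) (δ/32)) εP, ?_, ?_, ?_, ?_⟩
      · exact lt_min (lt_min (by positivity) (by positivity)) hεP
      · exact le_trans (min_le_left _ _) (min_le_left _ _)
      · exact le_trans (min_le_left _ _) (min_le_right _ _)
      · exact min_le_right _ _
    refine ⟨εB, hεBpos, rP, hrP, ?_⟩
    intro x hxM u huN hx hu
    have huQ : u ∈ limitingNormalCone Q x :=
      hClim x u hxM huN (by linarith) (by linarith)
    have h := hPR x (hMQ hxM) u huQ (by linarith) (by linarith)
    refine ⟨⟨hxM, Metric.mem_closedBall.mpr (le_of_lt hx)⟩, fun y hy hne => ?_⟩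
    refine h.2 y ⟨hMQ hy.1, Metric.mem_closedBall.mpr ?_⟩ hne
    have := Metric.mem_closedBall.mp hy.2
    linarith
  · -- M prox-regular → Q prox-regular
    intro hPRM
    obtain ⟨ε₀, hε₀, r₀, hr₀, hypM⟩ := s13_hyp_from_PR hPRM
    obtain ⟨ε, hε, τ, hτ, hclaim⟩ := s13_claimA hQ hMQ hvb hρ hδ hident hε₀ hr₀ hypM
    refine ⟨⟨1, one_pos, hQ.inter Metric.isClosed_closedBall⟩, ε, hε, 2/τ, by positivity, ?_⟩
    intro x hxQ v hvN hx hv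
    have hlim : ∀ y ∈ Q, 2*τ*⟪v, y - x⟫ ≤ ‖y - x‖^2 := by
      intro y hy
      obtain ⟨xs, vs, hF, hxs, hvs⟩ := hvN
      have hev : ∀ᶠ j in Filter.atTop,
          dist (xs j) xb < 2*ε ∧ dist (vs j) vb < 2*ε := by
        have h1 := (Metric.tendsto_nhds.mp hxs) (ε - dist x xb) (by linarith)
        have h2 := (Metric.tendsto_nhds.mp hvs) (ε - dist v vb) (by linarith)
        filter_upwards [h1, h2] with j hj1 hj2
        constructor
        · have := dist_triangle (xs j) x xb
          linarith
        · have := dist_triangle (vs j) v vb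
          linarith
      have hineq : ∀ᶠ j in Filter.atTop,
          2*τ*⟪vs j, y - xs j⟫ ≤ ‖y - xs j‖^2 := by
        filter_upwards [hev] with j hj
        exact hclaim (xs j) (vs j) (hF j).1 (hF j) hj.1 hj.2 y hy
      have ht1 : Filter.Tendsto (fun j => 2*τ*⟪vs j, y - xs j⟫) Filter.atTop
          (nhds (2*τ*⟪v, y - x⟫)) :=
        (hvs.inner (tendsto_const_nhds.sub hxs)).const_mul (2*τ)
      have ht2 : Filter.Tendsto (fun j => ‖y - xs j‖^2) Filter.atTop
          (nhds (‖y - x‖^2)) :=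
        ((tendsto_const_nhds.sub hxs).norm).pow 2
      exact le_of_tendsto_of_tendsto ht1 ht2 hineq
    refine ⟨⟨hxQ, Metric.mem_closedBall.mpr (le_of_lt hx)⟩, fun y hy hne => ?_⟩
    rw [s13_L1 (by positivity : (0:ℝ) < 2/τ)]
    have hN : 0 < ‖y - x‖ := norm_pos_iff.mpr (sub_ne_zero.mpr hne)
    have hNsq : 0 < ‖y - x‖^2 := by positivity
    have h := hlim y hy.1
    have e : (2/τ)/2*‖y - x‖^2 = ‖y - x‖^2/τ := by
      field_simp
    rw [e, lt_div_iff₀ hτ]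
    nlinarith
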